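/- For the product measure ν_⊗ with density (1/2)cos x cos y dx dy and 0 < λ ≤ 1, the transversal resistance equals R_T[ν_⊗, λ] = (10λ + λ³)π/80. -/

import Mathlib

open Real MeasureTheory intervalIntegral

/-- the product measure `ν_⊗` with density `(1/2) cos x cos y` on the square. -/
noncomputable def nuProd : Measure (ℝ × ℝ) :=
  (volume.restrict ((Set.Icc (-(π/2)) (π/2)) ×ˢ (Set.Icc (-(π/2)) (π/2)))).withDensity
    (fun p => ENNReal.ofReal ((1/2) * Real.cos p.1 * Real.cos p.2))

noncomputable def zeta (x lam : ℝ) : ℝ :=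
  Real.arcsin (Real.sqrt (1 - lam^2 * Real.cos x ^ 2))

/-- transversal component of the cost `c(x,y,λ)` for `0 < λ ≤ 1`. -/
noncomputable def cT (lam : ℝ) (p : ℝ × ℝ) : ℝ :=
  (3/4) * ((lam * Real.sin p.1 + Real.sin (zeta p.1 lam))^3 / Real.sin (zeta p.1 lam)) *
    Real.cos ((p.1 - p.2)/2) * Real.cos (zeta p.1 lam + (p.1 - p.2)/2)

/-! ### auxiliary 1-D integrals -/

lemma innerInt (P Q R : ℝ) :
    ∫ y in (-(π/2))..(π/2), (P * cos y + Q * cos y ^ 2 + R * (sin y * cos y))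
      = 2*P + (π/2)*Q := by
  have hd : ∀ y ∈ Set.uIcc (-(π/2)) (π/2), HasDerivAt
      (fun y => P * sin y + Q * ((y + sin y * cos y)/2) + R * (sin y^2/2))
      (P * cos y + Q * cos y ^ 2 + R * (sin y * cos y)) y := by
    intro y _
    have h1 := sin_sq_add_cos_sq y
    have : HasDerivAt (fun y => P * sin y + Q * ((y + sin y * cos y)/2) + R * (sin y^2/2))
        (P * cos y + Q * ((1 + (cos y * cos y + sin y * (-sin y)))/2)
          + R * ((2 * sin y ^ 1 * cos y)/2)) y := by
      apply HasDerivAt.add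
      apply HasDerivAt.add
      · exact (hasDerivAt_sin y).const_mul P
      · exact (((hasDerivAt_id y).add ((hasDerivAt_sin y).mul (hasDerivAt_cos y))).div_const 2).const_mul Q
      · exact (((hasDerivAt_sin y).pow 2).div_const 2).const_mul R
    convert this using 1
    linear_combination (Q/2) * h1
  rw [integral_eq_sub_of_hasDerivAt hd (by apply Continuous.intervalIntegrable; continuity)]
  simp
  ring

lemma outerInt (b1 b2 a0 a2 a4 : ℝ) :
    ∫ x in (-(π/2))..(π/2),
      (b1 * cos x ^ 2 + b2 * (sin x ^2 * cos x ^2) + (a0 + a2 * sin x ^2 + a4 * sin x ^4) * cos x)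
      = b1*(π/2) + b2*(π/8) + 2*a0 + (2/3)*a2 + (2/5)*a4 := by
  have hd : ∀ x ∈ Set.uIcc (-(π/2)) (π/2), HasDerivAt
      (fun x => b1 * ((x + sin x * cos x)/2) + b2 * (x/8 - sin (4*x)/32)
        + (a0 * sin x + a2 * (sin x^3/3) + a4 * (sin x^5/5)))
      (b1 * cos x ^ 2 + b2 * (sin x ^2 * cos x ^2) + (a0 + a2 * sin x ^2 + a4 * sin x ^4) * cos x) x := by
    intro x _
    have h1 := sin_sq_add_cos_sq x
    have h4 : cos (4*x) = 1 - 8 * (sin x^2 * cos x^2) := by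
      have h : (4:ℝ)*x = 2*(2*x) := by ring
      rw [h, cos_two_mul, cos_two_mul]
      linear_combination (8*(cos x)^2) * (sin_sq_add_cos_sq x)
    have : HasDerivAt
        (fun x => b1 * ((x + sin x * cos x)/2) + b2 * (x/8 - sin (4*x)/32)
          + (a0 * sin x + a2 * (sin x^3/3) + a4 * (sin x^5/5)))
        (b1 * ((1 + (cos x * cos x + sin x * (-sin x)))/2) + b2 * (1/8 - (cos (4*x) * 4)/32)
          + (a0 * cos x + a2 * ((3 * sin x ^2 * cos x)/3) + a4 * ((5 * sin x^4 * cos x)/5))) x := by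
      apply HasDerivAt.add
      apply HasDerivAt.add
      · exact (((hasDerivAt_id x).add ((hasDerivAt_sin x).mul (hasDerivAt_cos x))).div_const 2).const_mul b1
      · apply HasDerivAt.const_mul
        apply HasDerivAt.sub
        · exact (hasDerivAt_id x).div_const 8
        · exact (((hasDerivAt_sin (4*x)).comp x (by simpa using (hasDerivAt_id x).const_mul (4:ℝ))).div_const 32)
      · apply HasDerivAt.add
        apply HasDerivAt.add
        · exact (hasDerivAt_sin x).const_mul a0
        · exact (((hasDerivAt_sin x).pow 3).div_const 3).const_mul a2
        · exact (((hasDerivAt_sin x).pow 5).div_const 5).const_mul a4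
    convert this using 1
    rw [h4]
    linear_combination (b1/2) * h1
  rw [integral_eq_sub_of_hasDerivAt hd (by apply Continuous.intervalIntegrable; continuity)]
  have hs1 : sin (4*(π/2)) = 0 := by
    rw [show (4:ℝ)*(π/2) = 2*π by ring]; simp [sin_two_mul]
  have hs2 : sin (4*(-(π/2))) = 0 := by
    rw [show (4:ℝ)*(-(π/2)) = -(2*π) by ring]; simp [sin_two_mul]
  simp [hs1, hs2]
  ring

/-! ### facts about `zeta` -/

lemma sin_zeta (lam x : ℝ) (h1 : lam ≤ 1) :
    sin (zeta x lam) = Real.sqrt (1 - lam^2 * cos x ^ 2) := by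
  unfold zeta
  rw [Real.sin_arcsin]
  · exact le_trans (by norm_num) (Real.sqrt_nonneg _)
  · calc Real.sqrt (1 - lam^2 * cos x ^2) ≤ Real.sqrt 1 :=
          Real.sqrt_le_sqrt (by nlinarith [sq_nonneg (lam * cos x)])
      _ = 1 := Real.sqrt_one

lemma sin_zeta_nonneg (lam x : ℝ) (h1 : lam ≤ 1) : 0 ≤ sin (zeta x lam) := by
  rw [sin_zeta lam x h1]; exact Real.sqrt_nonneg _

lemma arg_nonneg (lam x : ℝ) (h0 : 0 ≤ lam) (h1 : lam ≤ 1) : 0 ≤ 1 - lam^2 * cos x ^ 2 := by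
  have hl : lam^2 ≤ 1 := by nlinarith
  nlinarith [cos_sq_le_one x, sq_nonneg (cos x)]

lemma sin_zeta_sq (lam x : ℝ) (h0 : 0 ≤ lam) (h1 : lam ≤ 1) :
    sin (zeta x lam) ^ 2 = 1 - lam^2 * cos x ^ 2 := by
  rw [sin_zeta lam x h1, Real.sq_sqrt (arg_nonneg lam x h0 h1)]

lemma cos_zeta (lam x : ℝ) (h0 : 0 ≤ lam) (h1 : lam ≤ 1) (hx : 0 ≤ cos x) :
    cos (zeta x lam) = lam * cos x := by
  unfold zeta
  rw [Real.cos_arcsin, Real.sq_sqrt (arg_nonneg lam x h0 h1),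
    show 1 - (1 - lam^2 * cos x ^2) = (lam * cos x)^2 by ring,
    Real.sqrt_sq (by positivity)]

lemma sin_zeta_ge (lam x : ℝ) (h0 : 0 ≤ lam) (h1 : lam ≤ 1) :
    lam * |sin x| ≤ sin (zeta x lam) := by
  have h2 := sin_zeta_sq lam x h0 h1
  have h3 := sin_zeta_nonneg lam x h1
  have h4 := sin_sq_add_cos_sq x
  nlinarith [abs_nonneg (sin x), sq_abs (sin x), sq_nonneg (sin (zeta x lam) - lam * |sin x|),
    sq_nonneg (sin (zeta x lam) + lam * |sin x|), sq_nonneg (1-lam), mul_nonneg h0 (abs_nonneg (sin x))]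

lemma ratio_bound (lam x : ℝ) (h0 : 0 ≤ lam) (h1 : lam ≤ 1) :
    0 ≤ (lam * sin x + sin (zeta x lam))^3 / sin (zeta x lam) ∧
    (lam * sin x + sin (zeta x lam))^3 / sin (zeta x lam) ≤ 8 := by
  set s := sin (zeta x lam) with hs
  have h3 : 0 ≤ s := sin_zeta_nonneg lam x h1
  have h5 : lam * |sin x| ≤ s := sin_zeta_ge lam x h0 h1
  rcases eq_or_lt_of_le h3 with h | h
  · rw [← h]; simp
  · have hge : 0 ≤ lam * sin x + s := by
      have : -(lam * sin x) ≤ lam * |sin x| := by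
        calc -(lam * sin x) ≤ |lam * sin x| := neg_le_abs _
          _ = lam * |sin x| := by rw [abs_mul, abs_of_nonneg h0]
      linarith
    have hle : lam * sin x + s ≤ 2 * s := by
      have : lam * sin x ≤ lam * |sin x| := by
        apply mul_le_mul_of_nonneg_left (le_abs_self _) h0
      linarith
    constructor
    · positivity
    · rw [div_le_iff₀ h]
      have hs1 : s ≤ 1 := sin_le_one _
      have h8 : (lam * sin x + s)^3 ≤ (2*s)^3 := pow_le_pow_left₀ hge hle 3
      nlinarith [h8, mul_nonneg (mul_nonneg h3 h3) (sub_nonneg.2 hs1),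
        mul_nonneg h3 (sub_nonneg.2 hs1)]

lemma cT_bound (lam : ℝ) (h0 : 0 < lam) (h1 : lam ≤ 1) (p : ℝ × ℝ) : |cT lam p| ≤ 6 := by
  obtain ⟨hr0, hr8⟩ := ratio_bound lam p.1 h0.le h1
  unfold cT
  set r := (lam * sin p.1 + sin (zeta p.1 lam))^3 / sin (zeta p.1 lam)
  calc |3/4 * r * cos ((p.1 - p.2)/2) * cos (zeta p.1 lam + (p.1 - p.2)/2)|
      = 3/4 * |r| * |cos ((p.1 - p.2)/2)| * |cos (zeta p.1 lam + (p.1 - p.2)/2)| := by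
        rw [abs_mul, abs_mul, abs_mul]; norm_num
    _ ≤ 3/4 * 8 * 1 * 1 := by
        gcongr
        · rw [abs_of_nonneg hr0]; exact hr8
        · exact abs_cos_le_one _
        · exact abs_cos_le_one _
    _ = 6 := by norm_num

lemma zeta_cont (lam : ℝ) : Continuous fun x : ℝ => zeta x lam := by
  unfold zeta
  exact Real.continuous_arcsin.comp (Real.continuous_sqrt.comp (by continuity))

lemma cT_meas (lam : ℝ) : Measurable (cT lam) := by
  unfold cT
  have hz : Continuous fun p : ℝ × ℝ => zeta p.1 lam :=
    (zeta_cont lam).comp continuous_fst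
  have hnum : Measurable fun p : ℝ × ℝ => (lam * Real.sin p.1 + Real.sin (zeta p.1 lam))^3 :=
    (((continuous_const.mul (Real.continuous_sin.comp continuous_fst)).add
      (Real.continuous_sin.comp hz)).pow 3).measurable
  have hden : Measurable fun p : ℝ × ℝ => Real.sin (zeta p.1 lam) :=
    (Real.continuous_sin.comp hz).measurable
  have hc1 : Measurable fun p : ℝ × ℝ => Real.cos ((p.1 - p.2)/2) := by fun_prop
  have hc2 : Measurable fun p : ℝ × ℝ => Real.cos (zeta p.1 lam + (p.1 - p.2)/2) :=
    (Real.continuous_cos.comp (hz.add (by continuity))).measurable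
  exact ((measurable_const.mul (hnum.div hden)).mul hc1).mul hc2

lemma symm_eq (lam : ℝ) (h0 : 0 < lam) (h1 : lam ≤ 1) (x y : ℝ)
    (hx : x ∈ Set.Icc (-(π/2)) (π/2)) :
    (cT lam (x,y) + cT lam (-(x,y)))/2
      = (3/4) * cos ((x-y)/2) * ( lam * cos x * cos ((x-y)/2) * (1 - lam^2 + 4*lam^2*sin x^2)
          - lam * sin x * sin ((x-y)/2) * (3*(1-lam^2) + 4*lam^2*sin x^2) ) := by
  have hcx : 0 ≤ cos x := Real.cos_nonneg_of_mem_Icc (by simpa using hx)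
  have hz : cos (zeta x lam) = lam * cos x := cos_zeta lam x h0.le h1 hcx
  have hsq : sin (zeta x lam) ^ 2 = 1 - lam^2 * cos x ^2 := sin_zeta_sq lam x h0.le h1
  have hs0 : 0 ≤ sin (zeta x lam) := sin_zeta_nonneg lam x h1
  set s := sin (zeta x lam) with hsdef
  set d := (x - y)/2 with hd
  have e1 : cT lam (x,y) = (3/4)*((lam*sin x + s)^3/s)*cos d*(lam*cos x*cos d - s*sin d) := by
    unfold cT
    simp only
    rw [Real.cos_add, hz, ← hsdef, ← hd]
  have e2 : cT lam (-(x,y)) = (3/4)*((-(lam*sin x) + s)^3/s)*cos d*(lam*cos x*cos d + s*sin d) := by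
    have hz2 : zeta (-x) lam = zeta x lam := by unfold zeta; rw [Real.cos_neg]
    unfold cT
    simp only [Prod.fst_neg, Prod.snd_neg]
    rw [hz2, Real.sin_neg, show (-x - -y)/2 = -((x-y)/2) by ring, Real.cos_neg,
      show zeta x lam + -((x-y)/2) = zeta x lam - (x-y)/2 by ring, Real.cos_sub, hz, ← hsdef, ← hd]
    ring
  rw [e1, e2]
  have hpy := sin_sq_add_cos_sq x
  rcases eq_or_lt_of_le hs0 with h | h
  · -- s = 0 case
    have hsx : sin x ^ 2 = 0 := by nlinarith [sq_nonneg (sin x), sq_nonneg (lam * sin x)]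
    have hu : sin x = 0 := by
      have := sq_eq_zero_iff.mp hsx
      exact this
    have hc2 : cos x ^ 2 = 1 := by nlinarith
    have hl2 : lam ^ 2 = 1 := by nlinarith
    rw [← h, hu, hl2]
    norm_num
  · have hne : s ≠ 0 := ne_of_gt h
    have key : (lam*sin x + s)^3*(lam*cos x*cos d - s*sin d)
        + (-(lam*sin x) + s)^3*(lam*cos x*cos d + s*sin d)
        = 2*s*( lam * cos x * cos d * (1 - lam^2 + 4*lam^2*sin x^2)
              - lam * sin x * sin d * (3*(1-lam^2) + 4*lam^2*sin x^2) ) := by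
      linear_combination (2*s*lam*(cos x*cos d - 3*sin x*sin d)) * hsq
        - (2*s*lam*(cos x*cos d - 3*sin x*sin d)*lam^2) * hpy
    calc (3/4*((lam*sin x + s)^3/s)*cos d*(lam*cos x*cos d - s*sin d)
          + 3/4*((-(lam*sin x) + s)^3/s)*cos d*(lam*cos x*cos d + s*sin d))/2
        = (3/8)*cos d*(( (lam*sin x + s)^3*(lam*cos x*cos d - s*sin d)
            + (-(lam*sin x)+s)^3*(lam*cos x*cos d + s*sin d) )/s) := by ring
      _ = (3/8)*cos d*((2*s*( lam * cos x * cos d * (1 - lam^2 + 4*lam^2*sin x^2)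
              - lam * sin x * sin d * (3*(1-lam^2) + 4*lam^2*sin x^2) ))/s) := by rw [key]
      _ = (3/4) * cos d * ( lam * cos x * cos d * (1 - lam^2 + 4*lam^2*sin x^2)
          - lam * sin x * sin d * (3*(1-lam^2) + 4*lam^2*sin x^2) ) := by
          field_simp
          ring

theorem stmt_13 (lam : ℝ) (h0 : 0 < lam) (h1 : lam ≤ 1) :
    (∫ p, cT lam p ∂nuProd) = (10 * lam + lam^3) * π / 80 := by
  have hle : -(π/2) ≤ π/2 := by linarith [pi_pos]
  set I : Set ℝ := Set.Icc (-(π/2)) (π/2) with hI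
  set S : Set (ℝ × ℝ) := I ×ˢ I with hS
  have hImeas : MeasurableSet I := measurableSet_Icc
  have hSmeas : MeasurableSet S := hImeas.prod hImeas
  set D : ℝ × ℝ → ℝ := fun p => (1/2) * Real.cos p.1 * Real.cos p.2 with hD
  have hDcont : Continuous D := by fun_prop
  set E : ℝ × ℝ → ℝ := fun p =>
    (3/4) * cos ((p.1-p.2)/2) * ( lam * cos p.1 * cos ((p.1-p.2)/2) * (1 - lam^2 + 4*lam^2*sin p.1^2)
        - lam * sin p.1 * sin ((p.1-p.2)/2) * (3*(1-lam^2) + 4*lam^2*sin p.1^2) ) with hE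
  set g : ℝ × ℝ → ℝ := fun p => D p * cT lam p with hg
  -- Step 1 : unfold the density
  have step1 : (∫ p, cT lam p ∂nuProd) = ∫ p in S, g p := by
    rw [nuProd]
    rw [show (fun p : ℝ×ℝ => ENNReal.ofReal ((1/2) * Real.cos p.1 * Real.cos p.2))
        = fun p : ℝ×ℝ => ((Real.toNNReal (D p) : NNReal) : ENNReal) from rfl]
    rw [integral_withDensity_eq_integral_smul (hDcont.measurable.real_toNNReal) (cT lam)]
    apply setIntegral_congr_fun hSmeas
    intro p hp
    obtain ⟨hp1, hp2⟩ := Set.mem_prod.mp hp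
    have hD0 : 0 ≤ D p := by
      have c1 := Real.cos_nonneg_of_mem_Icc (by simpa [hI] using hp1)
      have c2 := Real.cos_nonneg_of_mem_Icc (by simpa [hI] using hp2)
      have : (0:ℝ) ≤ (1/2) * Real.cos p.1 * Real.cos p.2 := by positivity
      simpa [hD] using this
    show (D p).toNNReal • cT lam p = D p * cT lam p
    rw [NNReal.smul_def, Real.coe_toNNReal _ hD0, smul_eq_mul]
  -- Step 2 : symmetrization
  have hg_meas : Measurable g := hDcont.measurable.mul (cT_meas lam)
  have hSfin : volume S ≠ ⊤ := ne_of_lt ((isCompact_Icc.prod isCompact_Icc).measure_lt_top)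
  have hgbd : ∀ p, |g p| ≤ 3 := by
    intro p
    have h6 := cT_bound lam h0 h1 p
    have hDb : |D p| ≤ 1/2 := by
      rw [hD]
      simp only
      rw [abs_mul, abs_mul]
      calc |(1:ℝ)/2| * |Real.cos p.1| * |Real.cos p.2| ≤ (1/2) * 1 * 1 := by
            rw [abs_of_nonneg (by norm_num : (0:ℝ) ≤ 1/2)]
            gcongr <;> exact abs_cos_le_one _
        _ = 1/2 := by norm_num
    calc |g p| = |D p| * |cT lam p| := by rw [hg]; simp only; rw [abs_mul]
      _ ≤ (1/2) * 6 := by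
          apply mul_le_mul hDb h6 (abs_nonneg _) (by norm_num)
      _ = 3 := by norm_num
  have hInt1 : IntegrableOn g S volume :=
    Measure.integrableOn_of_bounded hSfin hg_meas.aestronglyMeasurable (ae_of_all _ hgbd)
  have hInt2 : IntegrableOn (fun p => g (-p)) S volume :=
    Measure.integrableOn_of_bounded hSfin (hg_meas.comp measurable_neg).aestronglyMeasurable
      (ae_of_all _ (fun p => hgbd (-p)))
  have hSneg : (fun p : ℝ×ℝ => -p) ⁻¹' S = S := by
    ext ⟨x, y⟩
    simp only [Set.mem_preimage, hS, Set.mem_prod, hI, Set.mem_Icc, Prod.fst_neg, Prod.snd_neg]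
    constructor
    · rintro ⟨⟨a, b⟩, ⟨c, d⟩⟩; exact ⟨⟨by linarith, by linarith⟩, ⟨by linarith, by linarith⟩⟩
    · rintro ⟨⟨a, b⟩, ⟨c, d⟩⟩; exact ⟨⟨by linarith, by linarith⟩, ⟨by linarith, by linarith⟩⟩
  have hswap : ∫ p in S, g (-p) = ∫ p in S, g p := by
    rw [← MeasureTheory.integral_indicator hSmeas, ← MeasureTheory.integral_indicator hSmeas]
    have hind : ∀ p : ℝ × ℝ, S.indicator (fun q => g (-q)) p = S.indicator g (-p) := by
      intro p
      by_cases hp : p ∈ S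
      · have hp' : -p ∈ S := by rw [← hSneg] at hp; exact hp
        rw [Set.indicator_of_mem hp, Set.indicator_of_mem hp']
      · have hp' : -p ∉ S := by
          intro hc
          apply hp
          rw [← hSneg]
          simpa using hc
        rw [Set.indicator_of_notMem hp, Set.indicator_of_notMem hp']
    simp_rw [hind]
    exact integral_neg_eq_self (S.indicator g) volume
  have step2 : ∫ p in S, g p = ∫ p in S, D p * E p := by
    have e1 : ∫ p in S, g p = ∫ p in S, (g p + g (-p))/2 := by
      rw [MeasureTheory.integral_div, integral_add hInt1 hInt2, hswap]
      ring
    rw [e1]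
    apply setIntegral_congr_fun hSmeas
    rintro ⟨x, y⟩ hp
    obtain ⟨hp1, hp2⟩ := Set.mem_prod.mp hp
    have hDneg : D (-(x,y)) = D (x,y) := by
      simp [hD, Real.cos_neg]
    have hsymm := symm_eq lam h0 h1 x y hp1
    show (g (x,y) + g (-(x,y)))/2 = D (x,y) * E (x,y)
    rw [hg]
    simp only
    rw [hDneg]
    calc (D (x,y) * cT lam (x,y) + D (x,y) * cT lam (-(x,y)))/2
        = D (x,y) * ((cT lam (x,y) + cT lam (-(x,y)))/2) := by ring
      _ = D (x,y) * E (x,y) := by rw [hsymm]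
  -- Step 3 : Fubini
  set F : ℝ × ℝ → ℝ := fun p => D p * E p with hF
  have hFcont : Continuous F := by
    apply hDcont.mul
    rw [hE]
    fun_prop
  have step3 : ∫ p in S, F p = ∫ x in I, (∫ y in I, F (x, y)) := by
    rw [hS, Measure.volume_eq_prod, ← Measure.prod_restrict]
    apply integral_prod
    rw [Measure.prod_restrict, ← Measure.volume_eq_prod]
    exact (hFcont.continuousOn).integrableOn_compact (isCompact_Icc.prod isCompact_Icc)
  -- Step 4 : inner integral
  have hinner : ∀ x ∈ I, (∫ y in I, F (x, y)) =
      (3*lam/16)*cos x*(2*cos x*(1-lam^2+4*lam^2*sin x^2)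
        + (π/2)*((1-lam^2+4*lam^2*sin x^2)*cos x^2 - (3*(1-lam^2)+4*lam^2*sin x^2)*sin x^2)) := by
    intro x _
    rw [hI, integral_Icc_eq_integral_Ioc, ← intervalIntegral.integral_of_le hle]
    have heq : (fun y => F (x, y)) = fun y =>
        ((3*lam/16)*cos x*(cos x*(1-lam^2+4*lam^2*sin x^2))) * cos y
        + ((3*lam/16)*cos x*((1-lam^2+4*lam^2*sin x^2)*cos x^2
            - (3*(1-lam^2)+4*lam^2*sin x^2)*sin x^2)) * cos y^2
        + ((3*lam/16)*cos x*(cos x*sin x*((1-lam^2+4*lam^2*sin x^2)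
            + (3*(1-lam^2)+4*lam^2*sin x^2)))) * (sin y * cos y) := by
      funext y
      have h2d : (2:ℝ)*((x-y)/2) = x - y := by ring
      have hcd2 : cos ((x-y)/2)^2 = (1 + (cos x*cos y + sin x*sin y))/2 := by
        have hh := cos_two_mul ((x-y)/2)
        rw [h2d, Real.cos_sub] at hh
        linarith
      have hcdsd : sin ((x-y)/2)*cos ((x-y)/2) = (sin x*cos y - cos x*sin y)/2 := by
        have hh := sin_two_mul ((x-y)/2)
        rw [h2d, Real.sin_sub] at hh
        linarith
      show D (x,y) * E (x,y) = _
      rw [hD, hE]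
      simp only
      linear_combination ((3*lam/8)*cos x^2*cos y*(1-lam^2+4*lam^2*sin x^2)) * hcd2
        - ((3*lam/8)*cos x*sin x*cos y*(3*(1-lam^2)+4*lam^2*sin x^2)) * hcdsd
    rw [heq, innerInt]
    ring
  -- Step 5 : outer integral
  have houter : (∫ x in I, ((3*lam/16)*cos x*(2*cos x*(1-lam^2+4*lam^2*sin x^2)
        + (π/2)*((1-lam^2+4*lam^2*sin x^2)*cos x^2
          - (3*(1-lam^2)+4*lam^2*sin x^2)*sin x^2))))
      = (10 * lam + lam^3) * π / 80 := by
    rw [hI, integral_Icc_eq_integral_Ioc, ← intervalIntegral.integral_of_le hle]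
    have heq : (fun x : ℝ => (3*lam/16)*cos x*(2*cos x*(1-lam^2+4*lam^2*sin x^2)
        + (π/2)*((1-lam^2+4*lam^2*sin x^2)*cos x^2
          - (3*(1-lam^2)+4*lam^2*sin x^2)*sin x^2)))
        = fun x : ℝ => (3*lam/8*(1-lam^2)) * cos x^2 + (3/2*lam^3) * (sin x^2 * cos x^2)
          + ((3*lam*π/32)*(1-lam^2) + ((3*lam*π/32)*(8*lam^2-4))*sin x^2
            + ((3*lam*π/32)*(-(8*lam^2)))*sin x^4) * cos x := by
      funext x
      linear_combination ((3*lam*π/32)*(1-lam^2+4*lam^2*sin x^2)*cos x) * (sin_sq_add_cos_sq x)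
    rw [heq, outerInt]
    ring
  rw [step1, step2, step3, setIntegral_congr_fun hImeas hinner]
  exact houter
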